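/- Let q₁ < q₂ < q₃ < q₄ < q₅ be five points on the real line, and consider six closed intervals: I⁰ with left endpoint in the open interval (q₁,q₂) and right endpoint in (q₃,q₄); Ī⁰ with left endpoint in (q₂,q₃) and right endpoint in (q₄,q₅); I¹ with left endpoint in (q₂,q₃) and right endpoint greater than q₅; I² with left endpoint in (q₄,q₅) and right endpoint greater than q₅; Ī¹ with left endpoint in (q₁,q₂) and right endpoint greater than q₅; Ī² with left endpoint in (q₃,q₄) and right endpoint greater than q₅. Then every subset T of these six intervals under which the five points q₁,…,q₅ have pairwise distinct codes satisfies |T| ≥ 3; moreover, if |T| = 3 then T contains at least one of I⁰ and Ī⁰. -/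

import Mathlib

/-- A closed bounded interval of `ℝ` is represented by its pair of endpoints;
a point `p` belongs to the interval `I` if `I.1 ≤ p ∧ p ≤ I.2`. -/
def memI (p : ℝ) (I : ℝ × ℝ) : Prop := I.1 ≤ p ∧ p ≤ I.2

/-- The code of a point `p` with respect to a finite set `S` of intervals:
the set of intervals of `S` containing `p`. -/
def code (S : Finset (ℝ × ℝ)) (p : ℝ) : Set (ℝ × ℝ) := {I | I ∈ S ∧ memI p I}

/-- `S` is a discriminating code for `P`: every point of `P` has a nonempty code and
distinct points of `P` have distinct codes. -/
def Discr (S : Finset (ℝ × ℝ)) (P : Finset ℝ) : Prop :=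
  (∀ p ∈ P, (code S p).Nonempty) ∧
    ∀ p ∈ P, ∀ q ∈ P, p ≠ q → code S p ≠ code S q

/-- `G` is one of the `n+1` gaps determined by the point set `P`:
either `(-∞, min P)`, or `(max P, ∞)`, or the open interval between two
consecutive points of `P`. -/
def IsGap (P : Finset ℝ) (G : Set ℝ) : Prop :=
  (∃ h : P.Nonempty, G = Set.Iio (P.min' h)) ∨
  (∃ h : P.Nonempty, G = Set.Ioi (P.max' h)) ∨
  (∃ p ∈ P, ∃ q ∈ P, p < q ∧ (∀ r ∈ P, ¬ (p < r ∧ r < q)) ∧ G = Set.Ioo p q)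

/-- Every gap determined by `P` contains an endpoint of some interval of `S`. -/
def GapsStabbed (P : Finset ℝ) (S : Finset (ℝ × ℝ)) : Prop :=
  ∀ G : Set ℝ, IsGap P G → ∃ I ∈ S, I.1 ∈ G ∨ I.2 ∈ G

theorem stmt6 (q1 q2 q3 q4 q5 : ℝ)
    (h12 : q1 < q2) (h23 : q2 < q3) (h34 : q3 < q4) (h45 : q4 < q5)
    (I0 Ib0 I1 I2 Ib1 Ib2 : ℝ × ℝ)
    (hI0 : I0.1 ∈ Set.Ioo q1 q2 ∧ I0.2 ∈ Set.Ioo q3 q4)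
    (hIb0 : Ib0.1 ∈ Set.Ioo q2 q3 ∧ Ib0.2 ∈ Set.Ioo q4 q5)
    (hI1 : I1.1 ∈ Set.Ioo q2 q3 ∧ q5 < I1.2)
    (hI2 : I2.1 ∈ Set.Ioo q4 q5 ∧ q5 < I2.2)
    (hIb1 : Ib1.1 ∈ Set.Ioo q1 q2 ∧ q5 < Ib1.2)
    (hIb2 : Ib2.1 ∈ Set.Ioo q3 q4 ∧ q5 < Ib2.2)
    (T : Finset (ℝ × ℝ))
    (hT : T ⊆ ({I0, Ib0, I1, I2, Ib1, Ib2} : Finset (ℝ × ℝ)))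
    (hDisc : ([q1, q2, q3, q4, q5] : List ℝ).Pairwise
      (fun a b => code T a ≠ code T b)) :
    3 ≤ T.card ∧ (T.card = 3 → I0 ∈ T ∨ Ib0 ∈ T) := by
  classical
  set f : ℝ → Finset (ℝ × ℝ) := fun p => T.filter (fun I => memI p I) with hf
  have hcode : ∀ p, code T p = ↑(f p) := by
    intro p; ext I; simp only [code, f, Set.mem_setOf_eq, Finset.mem_coe]; rw [Finset.mem_filter]
  have hfne : ∀ p q : ℝ, code T p ≠ code T q → f p ≠ f q := by
    intro p q h hpq
    exact h (by rw [hcode, hcode, hpq])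
  simp only [List.pairwise_cons, List.mem_cons, List.mem_singleton,
    List.not_mem_nil, List.Pairwise.nil] at hDisc
  obtain ⟨h1, h2, h3, h4, -⟩ := hDisc
  have d12 := hfne _ _ (h1 q2 (by simp))
  have d13 := hfne _ _ (h1 q3 (by simp))
  have d14 := hfne _ _ (h1 q4 (by simp))
  have d15 := hfne _ _ (h1 q5 (by simp))
  have d23 := hfne _ _ (h2 q3 (by simp))
  have d24 := hfne _ _ (h2 q4 (by simp))
  have d25 := hfne _ _ (h2 q5 (by simp))
  have d34 := hfne _ _ (h3 q4 (by simp))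
  have d35 := hfne _ _ (h3 q5 (by simp))
  have d45 := hfne _ _ (h4 q5 (by simp))
  have hcard5 : ({f q1, f q2, f q3, f q4, f q5} : Finset (Finset (ℝ × ℝ))).card = 5 := by
    rw [Finset.card_insert_of_notMem (by simp [d12, d13, d14, d15]),
      Finset.card_insert_of_notMem (by simp [d23, d24, d25]),
      Finset.card_insert_of_notMem (by simp [d34, d35]),
      Finset.card_insert_of_notMem (by simp [d45]),
      Finset.card_singleton]
  have hsubpow : ({f q1, f q2, f q3, f q4, f q5} : Finset (Finset (ℝ × ℝ))) ⊆ T.powerset := by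
    intro x hx
    simp only [Finset.mem_insert, Finset.mem_singleton] at hx
    rcases hx with rfl | rfl | rfl | rfl | rfl <;>
      exact Finset.mem_powerset.2 (Finset.filter_subset _ _)
  have h5le : 5 ≤ 2 ^ T.card := by
    calc 5 = ({f q1, f q2, f q3, f q4, f q5} : Finset (Finset (ℝ × ℝ))).card := hcard5.symm
    _ ≤ T.powerset.card := Finset.card_le_card hsubpow
    _ = 2 ^ T.card := Finset.card_powerset T
  have hge3 : 3 ≤ T.card := by
    by_contra hlt
    push_neg at hlt
    have : (2 : ℕ) ^ T.card ≤ 2 ^ 2 := Nat.pow_le_pow_right (by norm_num) (by omega)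
    omega
  refine ⟨hge3, ?_⟩
  intro hc3
  by_contra hno
  push_neg at hno
  have key : ∀ I ∈ T, q5 < I.2 := by
    intro I hI
    have hmem := hT hI
    simp only [Finset.mem_insert, Finset.mem_singleton] at hmem
    rcases hmem with rfl | rfl | rfl | rfl | rfl | rfl
    · exact absurd hI hno.1
    · exact absurd hI hno.2
    · exact hI1.2
    · exact hI2.2
    · exact hIb1.2
    · exact hIb2.2
  have sub : ∀ p p' : ℝ, p ≤ p' → p' ≤ q5 → f p ⊆ f p' := by
    intro p p' hpp' hp5 I hI
    simp only [f] at hI ⊢; rw [Finset.mem_filter] at hI ⊢; simp only [memI] at hI ⊢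
    exact ⟨hI.1, le_trans hI.2.1 hpp', le_of_lt (lt_of_le_of_lt hp5 (key I hI.1))⟩
  have c12 : (f q1).card < (f q2).card :=
    Finset.card_lt_card ⟨sub q1 q2 h12.le (by linarith), fun h => d12 (le_antisymm (sub q1 q2 h12.le (by linarith)) h)⟩
  have c23 : (f q2).card < (f q3).card :=
    Finset.card_lt_card ⟨sub q2 q3 h23.le (by linarith), fun h => d23 (le_antisymm (sub q2 q3 h23.le (by linarith)) h)⟩
  have c34 : (f q3).card < (f q4).card :=
    Finset.card_lt_card ⟨sub q3 q4 h34.le (by linarith), fun h => d34 (le_antisymm (sub q3 q4 h34.le (by linarith)) h)⟩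
  have c45 : (f q4).card < (f q5).card :=
    Finset.card_lt_card ⟨sub q4 q5 h45.le le_rfl, fun h => d45 (le_antisymm (sub q4 q5 h45.le le_rfl) h)⟩
  have c5T : (f q5).card ≤ T.card := Finset.card_le_card (Finset.filter_subset _ _)
  omega
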